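/- Let K be a field and consider the localization Ṗ of K[t_1,...,t_n] at the multiplicative set generated by { t_r − t_s : 1 ≤ r ≠ s ≤ n }. The symmetric group S_n acts on Ṗ by permuting variables. Then for any f ∈ Ṗ and 1 ≤ r < n, the operator s_r·f := −(s̃_r(f)−f)/(t_{r+1}−t_r) + s̃_r(f) is well-defined on Ṗ and the operators s_1,...,s_{n-1} satisfy the braid relations s_r s_{r+1} s_r = s_{r+1} s_r s_{r+1}. -/

import Mathlib

open MvPolynomial

set_option maxHeartbeats 1000000

/-- On the localization `Ṗ` of `K[t_1,…,t_n]` at the multiplicative set generated by the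
differences `t_r − t_s` (`r ≠ s`), on which `S_n` acts by permuting the variables, the operators
`s_r·f := −(s̃_r(f)−f)/(t_{r+1}−t_r) + s̃_r(f)` are well defined (the difference `t_{r+1}−t_r` is
invertible in `Ṗ`) and satisfy the braid relations `s_r s_{r+1} s_r = s_{r+1} s_r s_{r+1}`. -/
theorem stmt17 (K : Type*) [Field K] (n : ℕ)
    (M : Submonoid (MvPolynomial (Fin n) K))
    (hM : M = Submonoid.closure {p : MvPolynomial (Fin n) K | ∃ r s : Fin n, r ≠ s ∧ p = X r - X s})
    (r : ℕ) (hr : r + 2 < n)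
    (σ1 σ2 : Localization M ≃+* Localization M)
    (hσ1 : ∀ p : MvPolynomial (Fin n) K,
      σ1 (algebraMap (MvPolynomial (Fin n) K) (Localization M) p) =
        algebraMap (MvPolynomial (Fin n) K) (Localization M)
          (rename (Equiv.swap (⟨r, Nat.lt_of_succ_lt (Nat.lt_of_succ_lt hr)⟩ : Fin n)
            ⟨r + 1, Nat.lt_of_succ_lt hr⟩) p))
    (hσ2 : ∀ p : MvPolynomial (Fin n) K,
      σ2 (algebraMap (MvPolynomial (Fin n) K) (Localization M) p) =
        algebraMap (MvPolynomial (Fin n) K) (Localization M)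
          (rename (Equiv.swap (⟨r + 1, Nat.lt_of_succ_lt hr⟩ : Fin n) ⟨r + 2, hr⟩) p))
    (d1inv d2inv : Localization M)
    (hd1 : algebraMap (MvPolynomial (Fin n) K) (Localization M)
        (X ⟨r + 1, Nat.lt_of_succ_lt hr⟩ - X ⟨r, Nat.lt_of_succ_lt (Nat.lt_of_succ_lt hr)⟩)
          * d1inv = 1)
    (hd2 : algebraMap (MvPolynomial (Fin n) K) (Localization M)
        (X ⟨r + 2, hr⟩ - X ⟨r + 1, Nat.lt_of_succ_lt hr⟩) * d2inv = 1)
    (S1 S2 : Localization M → Localization M)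
    (hS1 : ∀ f : Localization M, S1 f = -(σ1 f - f) * d1inv + σ1 f)
    (hS2 : ∀ f : Localization M, S2 f = -(σ2 f - f) * d2inv + σ2 f) :
    ∀ f : Localization M, S1 (S2 (S1 f)) = S2 (S1 (S2 f)) := by
  intro f
  set i0 : Fin n := ⟨r, Nat.lt_of_succ_lt (Nat.lt_of_succ_lt hr)⟩ with hi0
  set i1 : Fin n := ⟨r + 1, Nat.lt_of_succ_lt hr⟩ with hi1
  set i2 : Fin n := ⟨r + 2, hr⟩ with hi2
  set φ := algebraMap (MvPolynomial (Fin n) K) (Localization M) with hφ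
  have h01 : i0 ≠ i1 := by simp only [hi0, hi1, ne_eq, Fin.mk.injEq]; omega
  have h02 : i0 ≠ i2 := by simp only [hi0, hi2, ne_eq, Fin.mk.injEq]; omega
  have h12 : i1 ≠ i2 := by simp only [hi1, hi2, ne_eq, Fin.mk.injEq]; omega
  -- uniqueness of inverses
  have uniq : ∀ (p x y : Localization M), p * x = 1 → p * y = 1 → x = y := by
    intro p x y h1 h2
    have : x * (p * y) = y * (p * x) := by ring
    simpa [h1, h2] using this
  -- σ1 ∘ σ1 = id
  have h11 : ∀ g : Localization M, σ1 (σ1 g) = g := by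
    have h : (σ1.toRingHom.comp σ1.toRingHom) = RingHom.id (Localization M) := by
      refine IsLocalization.ringHom_ext M (RingHom.ext fun p => ?_)
      simp only [RingHom.comp_apply, RingEquiv.toRingHom_eq_coe, RingHom.coe_coe,
        RingHom.id_apply]
      rw [hσ1, hσ1, rename_rename]
      have hid : ⇑(Equiv.swap i0 i1) ∘ ⇑(Equiv.swap i0 i1) = id := by
        funext x; simp
      rw [hid, rename_id, AlgHom.id_apply]
    intro g
    exact RingHom.congr_fun h g
  have h22 : ∀ g : Localization M, σ2 (σ2 g) = g := by
    have h : (σ2.toRingHom.comp σ2.toRingHom) = RingHom.id (Localization M) := by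
      refine IsLocalization.ringHom_ext M (RingHom.ext fun p => ?_)
      simp only [RingHom.comp_apply, RingEquiv.toRingHom_eq_coe, RingHom.coe_coe,
        RingHom.id_apply]
      rw [hσ2, hσ2, rename_rename]
      have hid : ⇑(Equiv.swap i1 i2) ∘ ⇑(Equiv.swap i1 i2) = id := by
        funext x; simp
      rw [hid, rename_id, AlgHom.id_apply]
    intro g
    exact RingHom.congr_fun h g
  -- braid relation for σ's
  have hbr : ∀ g : Localization M, σ2 (σ1 (σ2 g)) = σ1 (σ2 (σ1 g)) := by
    have h : (σ2.toRingHom.comp (σ1.toRingHom.comp σ2.toRingHom)) =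
        (σ1.toRingHom.comp (σ2.toRingHom.comp σ1.toRingHom)) := by
      refine IsLocalization.ringHom_ext M (RingHom.ext fun p => ?_)
      simp only [RingHom.comp_apply, RingEquiv.toRingHom_eq_coe, RingHom.coe_coe]
      rw [hσ2, hσ1, hσ2, hσ1, hσ2, hσ1, rename_rename, rename_rename,
        rename_rename, rename_rename]
      have hA : Equiv.swap i1 i2 * Equiv.swap i0 i1 * Equiv.swap i1 i2 =
          Equiv.swap i2 i0 := Equiv.swap_mul_swap_mul_swap h01 h02
      have hB : Equiv.swap i0 i1 * Equiv.swap i1 i2 * Equiv.swap i0 i1 =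
          Equiv.swap i0 i2 := by
        have h := Equiv.swap_mul_swap_mul_swap h12.symm h02.symm
        rwa [Equiv.swap_comm i1 i0, Equiv.swap_comm i2 i1] at h
      have hfn : (⇑(Equiv.swap i1 i2) ∘ ⇑(Equiv.swap i0 i1)) ∘ ⇑(Equiv.swap i1 i2) =
          (⇑(Equiv.swap i0 i1) ∘ ⇑(Equiv.swap i1 i2)) ∘ ⇑(Equiv.swap i0 i1) := by
        rw [← Equiv.Perm.coe_mul, ← Equiv.Perm.coe_mul, ← Equiv.Perm.coe_mul,
          ← Equiv.Perm.coe_mul, hA, hB, Equiv.swap_comm]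
      rw [hfn]
    intro g
    exact RingHom.congr_fun h g
  -- the third inverse
  set d3inv : Localization M := σ1 d2inv with hd3def
  have hd3 : φ (X i2 - X i0) * d3inv = 1 := by
    have := congrArg σ1 hd2
    rw [map_mul, map_one, hσ1] at this
    simpa [Equiv.swap_apply_left, Equiv.swap_apply_of_ne_of_ne h02.symm h12.symm,
      Equiv.swap_apply_right] using this
  -- values of σ's on the inverses
  have hu1 : σ1 d1inv = -d1inv := by
    have h1 : φ (X i0 - X i1) * σ1 d1inv = 1 := by
      have := congrArg σ1 hd1
      rw [map_mul, map_one, hσ1] at this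
      simpa [Equiv.swap_apply_left, Equiv.swap_apply_right] using this
    have h2 : φ (X i0 - X i1) * (-d1inv) = 1 := by
      have : φ (X i0 - X i1) = -φ (X i1 - X i0) := by rw [← map_neg]; ring_nf
      rw [this]; rw [show -φ (X i1 - X i0) * -d1inv = φ (X i1 - X i0) * d1inv by ring]
      exact hd1
    exact uniq _ _ _ h1 h2
  have hw1 : σ1 d3inv = d2inv := by rw [hd3def, h11]
  have hu2 : σ2 d1inv = d3inv := by
    have h1 : φ (X i2 - X i0) * σ2 d1inv = 1 := by
      have := congrArg σ2 hd1
      rw [map_mul, map_one, hσ2] at this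
      simpa [Equiv.swap_apply_left, Equiv.swap_apply_of_ne_of_ne h01 h02,
        Equiv.swap_apply_right] using this
    exact uniq _ _ _ h1 hd3
  have hv2 : σ2 d2inv = -d2inv := by
    have h1 : φ (X i1 - X i2) * σ2 d2inv = 1 := by
      have := congrArg σ2 hd2
      rw [map_mul, map_one, hσ2] at this
      simpa [Equiv.swap_apply_left, Equiv.swap_apply_right] using this
    have h2 : φ (X i1 - X i2) * (-d2inv) = 1 := by
      have : φ (X i1 - X i2) = -φ (X i2 - X i1) := by rw [← map_neg]; ring_nf
      rw [this]; rw [show -φ (X i2 - X i1) * -d2inv = φ (X i2 - X i1) * d2inv by ring]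
      exact hd2
    exact uniq _ _ _ h1 h2
  have hw2 : σ2 d3inv = d1inv := by
    have h1 : φ (X i1 - X i0) * σ2 d3inv = 1 := by
      have := congrArg σ2 hd3
      rw [map_mul, map_one, hσ2] at this
      simpa [Equiv.swap_apply_right, Equiv.swap_apply_of_ne_of_ne h01 h02] using this
    exact uniq _ _ _ h1 hd1
  -- key identity: 1/(y-x) * 1/(z-y) = 1/(z-x) * (1/(y-x) + 1/(z-y))
  have key : d1inv * d2inv = d3inv * d1inv + d3inv * d2inv := by
    have hc : φ (X i2 - X i0) = φ (X i1 - X i0) + φ (X i2 - X i1) := by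
      rw [← map_add]; ring_nf
    linear_combination (-(d1inv * d2inv)) * hd3 + d1inv * d2inv * d3inv * hc +
      d3inv * d1inv * hd2 + d3inv * d2inv * hd1
  simp only [hS1, hS2, map_add, map_mul, map_neg, map_sub, h11, h22, hbr,
    hu1, hw1, hu2, hv2, hw2, ← hd3def]
  have hv1 : σ1 d2inv = d3inv := hd3def.symm
  linear_combination ((1 - d1inv) * σ1 f - (1 - d2inv) * σ2 f - (d2inv - d1inv) * f) * key
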